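/- In every finite connected graph, there exists an ordering v_1, v_2, ..., v_k of all vertices (each vertex appearing exactly once) such that for every i, the graph distance between v_i and v_{i+1} is at most 3. -/

import Mathlib

open List

/-- Reachability within a set `S` (all support vertices in `S`). -/
def ReachIn {V : Type} (G : SimpleGraph V) (S : Finset V) (a b : V) : Prop :=
  ∃ p : G.Walk a b, ∀ x ∈ p.support, x ∈ S

lemma reachIn_trans {V : Type} {G : SimpleGraph V} {S : Finset V} {a b c : V}
    (h1 : ReachIn G S a b)
    (p : G.Walk b c) (hp : ∀ x ∈ p.support, x ∈ S) : ReachIn G S a c := by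
  obtain ⟨q, hq⟩ := h1
  refine ⟨q.append p, ?_⟩
  intro x hx
  rw [SimpleGraph.Walk.mem_support_append_iff] at hx
  exact hx.elim (hq x) (hp x)

lemma key {V : Type} [Fintype V] [DecidableEq V] {G : SimpleGraph V}
    (hconn : G.Connected) : ∀ (n : ℕ) (S : Finset V) (r : V), S.card ≤ n → r ∈ S →
    (∀ v ∈ S, ReachIn G S r v) →
    ∃ l : List V, l.Nodup ∧ (∀ x, x ∈ l ↔ x ∈ S) ∧ l.head? = some r ∧
      (∀ z ∈ l.getLast?, G.dist z r ≤ 1) ∧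
      List.Chain' (fun a b => G.dist a b ≤ 3) l := by
  intro n
  induction n with
  | zero => intro S r hcard hr _; simp [Finset.card_eq_zero.mp (Nat.le_zero.mp hcard)] at hr
  | succ n ih =>
    intro S r hcard hr hS
    classical
    by_cases hsing : ∀ v ∈ S, v = r
    · refine ⟨[r], by simp, ?_, rfl, ?_, List.isChain_singleton r⟩
      · intro x; simp only [mem_singleton]
        exact ⟨fun h => h ▸ hr, fun h => hsing x h⟩
      · intro z hz; simp only [getLast?_singleton, Option.mem_some_iff] at hz
        simp [← hz, SimpleGraph.dist_self]
    · push_neg at hsing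
      obtain ⟨v, hv, hvr⟩ := hsing
      -- find a neighbor c of r inside S
      obtain ⟨p, hp⟩ := hS v hv
      obtain ⟨c, hrc, hcS⟩ : ∃ c, G.Adj r c ∧ c ∈ S := by
        cases p with
        | nil => exact absurd rfl hvr
        | cons h q => exact ⟨_, h, hp _ (by simp [SimpleGraph.Walk.support_cons])⟩
      have hcr : c ≠ r := fun h => G.irrefl (h ▸ hrc)
      have hcSr : c ∈ S.erase r := Finset.mem_erase.mpr ⟨hcr, hcS⟩
      -- the component of c in S \ {r}
      set C : Finset V := (S.erase r).filter (fun w => ReachIn G (S.erase r) c w) with hC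
      have hcC : c ∈ C := by
        refine Finset.mem_filter.mpr ⟨hcSr, ⟨SimpleGraph.Walk.nil, ?_⟩⟩
        intro x hx
        simp only [SimpleGraph.Walk.support_nil, mem_singleton] at hx
        exact hx ▸ hcSr
      have hCsub : C ⊆ S.erase r := Finset.filter_subset _ _
      have hrC : r ∉ C := fun h => (Finset.mem_erase.mp (hCsub h)).1 rfl
      -- closure of C under walks within S \ {r}
      have hclose : ∀ {a b : V} (q : G.Walk a b), a ∈ C →
          (∀ x ∈ q.support, x ∈ S.erase r) → b ∈ C := by
        intro a b q ha hq
        have := (Finset.mem_filter.mp ha).2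
        exact Finset.mem_filter.mpr ⟨hq b q.end_mem_support, reachIn_trans this q hq⟩
      -- S \ C is connected via r
      have hS' : ∀ w ∈ S \ C, ReachIn G (S \ C) r w := by
        intro w hw
        obtain ⟨hwS, hwC⟩ := Finset.mem_sdiff.mp hw
        obtain ⟨p, hp⟩ := hS w hwS
        refine ⟨p.bypass, ?_⟩
        have hpath := p.bypass_isPath
        have hsub : ∀ x ∈ p.bypass.support, x ∈ S := fun x hx =>
          hp x (p.support_bypass_subset hx)
        intro x hx
        refine Finset.mem_sdiff.mpr ⟨hsub x hx, ?_⟩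
        intro hxC
        have hxr : x ≠ r := fun h => hrC (h ▸ hxC)
        set d := p.bypass.dropUntil x hx with hd
        have hdS : ∀ y ∈ d.support, y ∈ S := fun y hy =>
          hsub y (p.bypass.support_dropUntil_subset hx hy)
        have hrd : r ∉ d.support := by
          intro hrd
          have hspec := p.bypass.take_spec hx
          have hnodup := hpath.support_nodup
          rw [← hspec, SimpleGraph.Walk.support_append] at hnodup
          have hdisj := List.disjoint_of_nodup_append hnodup
          have hr1 : r ∈ (p.bypass.takeUntil x hx).support :=
            (p.bypass.takeUntil x hx).start_mem_support
          have hr2 : r ∈ d.support.tail := by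
            have hcons := d.support_eq_cons
            rw [hcons] at hrd
            rcases List.mem_cons.mp hrd with h | h
            · exact absurd h.symm hxr
            · exact h
          exact hdisj hr1 hr2
        exact hwC (hclose d hxC (fun y hy =>
          Finset.mem_erase.mpr ⟨fun h => hrd (h ▸ hy), hdS y hy⟩))
      -- C is connected via c
      have hS'' : ∀ w ∈ C, ReachIn G C c w := by
        intro w hw
        obtain ⟨q, hq⟩ := (Finset.mem_filter.mp hw).2
        refine ⟨q, ?_⟩
        intro x hx
        exact hclose (q.takeUntil x hx) hcC (fun y hy =>
          hq y (q.support_takeUntil_subset hx hy))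
      have hrS' : r ∈ S \ C := Finset.mem_sdiff.mpr ⟨hr, hrC⟩
      have hCS : C ⊆ S := hCsub.trans (S.erase_subset r)
      have hcardC : C.card ≤ n := by
        have h1 : C.card < S.card :=
          Finset.card_lt_card ((Finset.ssubset_iff_of_subset hCS).mpr ⟨r, hr, hrC⟩)
        omega
      have hcardS' : (S \ C).card ≤ n := by
        have hcS' : c ∉ S \ C := fun h => (Finset.mem_sdiff.mp h).2 hcC
        have h1 : (S \ C).card < S.card :=
          Finset.card_lt_card ((Finset.ssubset_iff_of_subset (Finset.sdiff_subset)).mpr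
            ⟨c, hcS, hcS'⟩)
        omega
      obtain ⟨l1, hn1, hm1, hh1, hl1, hc1⟩ := ih (S \ C) r hcardS' hrS' hS'
      obtain ⟨l2, hn2, hm2, hh2, hl2, hc2⟩ := ih C c hcardC hcC hS''
      have hl1ne : l1 ≠ [] := fun h => by simp [h] at hh1
      have hl2ne : l2 ≠ [] := fun h => by simp [h] at hh2
      refine ⟨l1 ++ l2.reverse, ?_, ?_, ?_, ?_, ?_⟩
      · refine hn1.append (List.nodup_reverse.mpr hn2) ?_
        intro x hx1 hx2
        rw [mem_reverse] at hx2
        exact (Finset.mem_sdiff.mp ((hm1 x).mp hx1)).2 ((hm2 x).mp hx2)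
      · intro x
        simp only [mem_append, mem_reverse, hm1, hm2, Finset.mem_sdiff]
        constructor
        · rintro (⟨h1, _⟩ | h2)
          · exact h1
          · exact hCS h2
        · intro hxS
          by_cases hxC : x ∈ C
          · exact Or.inr hxC
          · exact Or.inl ⟨hxS, hxC⟩
      · rw [head?_append_of_ne_nil _ hl1ne]; exact hh1
      · intro z hz
        rw [getLast?_append_of_ne_nil _ (by simpa using hl2ne), getLast?_reverse, hh2] at hz
        rw [Option.mem_some_iff] at hz
        subst hz
        rw [SimpleGraph.dist_comm]
        exact le_trans (SimpleGraph.dist_le hrc.toWalk) (by simp [SimpleGraph.Adj.toWalk])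
      · refine hc1.append ?_ ?_
        · rw [isChain_reverse]
          refine hc2.imp ?_
          intro a b h
          simpa [flip, SimpleGraph.dist_comm] using h
        · intro x hx y hy
          have hxd : G.dist x r ≤ 1 := hl1 x hx
          rw [head?_reverse] at hy
          have hyd : G.dist y c ≤ 1 := hl2 y hy
          have hrcd : G.dist r c ≤ 1 :=
            le_trans (SimpleGraph.dist_le hrc.toWalk) (by simp [SimpleGraph.Adj.toWalk])
          calc G.dist x y ≤ G.dist x r + G.dist r y := hconn.dist_triangle
            _ ≤ G.dist x r + (G.dist r c + G.dist c y) :=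
              Nat.add_le_add_left hconn.dist_triangle _
            _ ≤ 1 + (1 + 1) :=
              Nat.add_le_add hxd (Nat.add_le_add hrcd
                (by rwa [SimpleGraph.dist_comm] at hyd))
            _ ≤ 3 := by norm_num

/-- In every finite connected graph, there exists an ordering of all vertices
(each appearing exactly once) such that consecutive vertices have graph
distance at most 3. -/
theorem stmt0 {V : Type} [Fintype V] [DecidableEq V] (G : SimpleGraph V)
    (hconn : G.Connected) :
    ∃ l : List V, l.Nodup ∧ (∀ v : V, v ∈ l) ∧
      ∀ i, (h : i + 1 < l.length) →
        G.dist (l.get ⟨i, by omega⟩) (l.get ⟨i + 1, h⟩) ≤ 3 := by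
  have hne : Nonempty V := hconn.nonempty
  obtain ⟨r⟩ := hne
  obtain ⟨l, hnodup, hmem, _, _, hchain⟩ := key hconn (Fintype.card V) Finset.univ r
    (by simp) (Finset.mem_univ r)
    (fun v _ => (hconn.preconnected r v).elim (fun p => ⟨p, fun x _ => Finset.mem_univ x⟩))
  refine ⟨l, hnodup, fun v => (hmem v).mpr (Finset.mem_univ v), ?_⟩
  intro i h
  exact List.isChain_iff_getElem.mp hchain i (by omega)
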